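/- Let K ≥ 1, σ², γ > 0 and h(z) = ∑_{n=0}^{K} [(σ²/γ)/(n + σ²/γ)] C(K,n) z^{K−n}(1−z)^n for z ∈ [0,1]. Then h is monotonically nondecreasing in z on [0,1], with h(1) = 1. -/

import Mathlib

/-- The coefficient `c_ε(z)` of Lemma 2. -/
noncomputable def cerr (K : ℕ) (σ2 γ z : ℝ) : ℝ :=
  ∑ n ∈ Finset.range (K + 1),
    ((σ2 / γ) / (n + σ2 / γ)) * (K.choose n) * z ^ (K - n) * (1 - z) ^ n

lemma key_identity (K : ℕ) (hK : 1 ≤ K) (a : ℕ → ℝ) (z : ℝ) :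
    ∑ n ∈ Finset.range (K + 1), a n * (K.choose n) *
        ((K - n : ℕ) * z ^ (K - n - 1) * (1 - z) ^ n +
          z ^ (K - n) * ((n : ℝ) * (1 - z) ^ (n - 1) * (-1)))
    = ∑ m ∈ Finset.range K,
        (a m - a (m + 1)) * (K * ((K - 1).choose m)) * z ^ (K - 1 - m) * (1 - z) ^ m := by
  simp only [mul_add]
  rw [Finset.sum_add_distrib]
  have hA : ∑ n ∈ Finset.range (K + 1),
      a n * (K.choose n) * ((K - n : ℕ) * z ^ (K - n - 1) * (1 - z) ^ n)
      = ∑ n ∈ Finset.range K,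
        a n * (K.choose n) * ((K - n : ℕ) * z ^ (K - n - 1) * (1 - z) ^ n) := by
    rw [Finset.sum_range_succ]
    simp
  have hB : ∑ n ∈ Finset.range (K + 1),
      a n * (K.choose n) * (z ^ (K - n) * ((n : ℝ) * (1 - z) ^ (n - 1) * (-1)))
      = ∑ m ∈ Finset.range K,
        a (m + 1) * (K.choose (m + 1)) *
          (z ^ (K - (m + 1)) * (((m + 1 : ℕ) : ℝ) * (1 - z) ^ m * (-1))) := by
    rw [Finset.sum_range_succ']
    simp
  rw [hA, hB, ← Finset.sum_add_distrib]
  apply Finset.sum_congr rfl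
  intro m hm
  have hmK : m < K := Finset.mem_range.mp hm
  have e1 : K - m - 1 = K - 1 - m := by omega
  have e2 : K - (m + 1) = K - 1 - m := by omega
  rw [e1, e2]
  have hc1n : (K - m) * K.choose m = K * ((K - 1).choose m) := by
    have h := Nat.choose_mul_succ_eq (K - 1) m
    rw [Nat.sub_add_cancel hK] at h
    rw [Nat.mul_comm, Nat.mul_comm K]; exact h.symm
  have hc2n : (m + 1) * K.choose (m + 1) = K * ((K - 1).choose m) := by
    have h := Nat.add_one_mul_choose_eq (K - 1) m
    rw [Nat.sub_add_cancel hK] at h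
    rw [Nat.mul_comm, ← h]

  have hc1 : ((K - m : ℕ) : ℝ) * (K.choose m) = K * ((K - 1).choose m) := by
    exact_mod_cast congrArg (Nat.cast (R := ℝ)) hc1n
  have hc2 : ((m + 1 : ℕ) : ℝ) * (K.choose (m + 1)) = K * ((K - 1).choose m) := by
    exact_mod_cast congrArg (Nat.cast (R := ℝ)) hc2n
  push_cast [Nat.cast_sub hmK.le] at hc1 hc2 ⊢
  linear_combination (a m * z ^ (K - 1 - m) * (1 - z) ^ m) * hc1 -
    (a (m + 1) * z ^ (K - 1 - m) * (1 - z) ^ m) * hc2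

lemma cerr_hasDerivAt (K : ℕ) (hK : 1 ≤ K) (σ2 γ z : ℝ) :
    HasDerivAt (fun z => cerr K σ2 γ z)
      (∑ m ∈ Finset.range K,
        ((σ2 / γ) / (m + σ2 / γ) - (σ2 / γ) / ((m + 1 : ℕ) + σ2 / γ)) *
          (K * ((K - 1).choose m)) * z ^ (K - 1 - m) * (1 - z) ^ m) z := by
  set a : ℕ → ℝ := fun n => (σ2 / γ) / (n + σ2 / γ) with ha
  have h1 : HasDerivAt (fun z => cerr K σ2 γ z)
      (∑ n ∈ Finset.range (K + 1),
        a n * (K.choose n) *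
          (((K - n : ℕ) : ℝ) * z ^ (K - n - 1) * (1 - z) ^ n +
            z ^ (K - n) * ((n : ℝ) * (1 - z) ^ (n - 1) * (-1)))) z := by
    unfold cerr
    apply HasDerivAt.fun_sum
    intro n _
    have hu : HasDerivAt (fun z : ℝ => z ^ (K - n)) (((K - n : ℕ) : ℝ) * z ^ (K - n - 1)) z :=
      hasDerivAt_pow _ _
    have hv : HasDerivAt (fun z : ℝ => (1 - z) ^ n) ((n : ℝ) * (1 - z) ^ (n - 1) * (-1)) z := by
      have h0 : HasDerivAt (fun z : ℝ => 1 - z) (-1) z := by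
        simpa using (hasDerivAt_id z).const_sub 1
      exact h0.pow n
    have h2 := (hu.fun_mul hv).const_mul (a n * (K.choose n))
    have heq : (fun z : ℝ => a n * (K.choose n) * z ^ (K - n) * (1 - z) ^ n)
        = fun z : ℝ => a n * (K.choose n) * (z ^ (K - n) * (1 - z) ^ n) := by
      ext t; ring
    rw [heq]
    convert h2 using 1
  have := key_identity K hK a z
  rw [← this]
  exact h1

theorem stmt17 (K : ℕ) (hK : 1 ≤ K) (σ2 γ : ℝ) (hσ : 0 < σ2) (hγ : 0 < γ) :
    MonotoneOn (fun z => cerr K σ2 γ z) (Set.Icc (0 : ℝ) 1) ∧ cerr K σ2 γ 1 = 1 := by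
  have hc : 0 < σ2 / γ := div_pos hσ hγ
  constructor
  · apply monotoneOn_of_deriv_nonneg (convex_Icc 0 1)
    · exact (Continuous.continuousOn (by
        unfold cerr
        exact continuous_finset_sum _ fun n _ => by fun_prop))
    · intro x hx
      exact (cerr_hasDerivAt K hK σ2 γ x).differentiableAt.differentiableWithinAt
    · intro x hx
      rw [interior_Icc] at hx
      rw [(cerr_hasDerivAt K hK σ2 γ x).deriv]
      apply Finset.sum_nonneg
      intro m hm
      have h1 : 0 ≤ (σ2 / γ) / (m + σ2 / γ) - (σ2 / γ) / ((m + 1 : ℕ) + σ2 / γ) := by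
        have hd1 : (0 : ℝ) < m + σ2 / γ := by positivity
        have hd2 : (0 : ℝ) < (m + 1 : ℕ) + σ2 / γ := by positivity
        have : (m : ℝ) + σ2 / γ ≤ ((m + 1 : ℕ) : ℝ) + σ2 / γ := by push_cast; linarith
        have := div_le_div_of_nonneg_left hc.le hd1 this
        linarith
      have h2 : (0 : ℝ) ≤ x ^ (K - 1 - m) := pow_nonneg hx.1.le _
      have h3 : (0 : ℝ) ≤ (1 - x) ^ m := by
        apply pow_nonneg; linarith [hx.2]
      have h4 : (0 : ℝ) ≤ (K : ℝ) * ((K - 1).choose m) := by positivity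
      exact mul_nonneg (mul_nonneg (mul_nonneg h1 h4) h2) h3
  · unfold cerr
    rw [Finset.sum_eq_single 0]
    · simp [div_self hc.ne']
    · intro n _ hn
      simp [sub_self, zero_pow hn]
    · intro h; simp at h
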